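/- Let m ≥ 2 and set n' = 2^{m−1}. The total number of subgroups of the direct product ℤ₂ × D_{2n'} equals 5σ(n') + 3τ(n') − 2n' − 1 (which equals 2^{m+2} + 3m − 6). -/

import Mathlib

/-- `tau k` is the number of positive divisors of `k`. -/
def tau (k : ℕ) : ℕ := k.divisors.card

/-- `sigma' k` is the sum of the positive divisors of `k`. -/
def sigma' (k : ℕ) : ℕ := ∑ d ∈ k.divisors, d

namespace CardSub


abbrev Z2 := Multiplicative (ZMod 2)

def g2 : Z2 := Multiplicative.ofAdd 1

lemma Z2cases : ∀ ε : Z2, ε = 1 ∨ ε = g2 := by decide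
lemma g2_mul_g2 : g2 * g2 = 1 := by decide
lemma g2_ne_one : g2 ≠ 1 := by decide

variable {G : Type*} [Group G]

/-- `N ≤ M` with index at most 2, phrased elementarily. -/
def Pind (N M : Subgroup G) : Prop :=
  N ≤ M ∧ ∀ x y, x ∈ M → y ∈ M → x ∉ N → y ∉ N → x * y ∈ N

def lift1 (N : Subgroup G) : Subgroup (Z2 × G) := (⊥ : Subgroup Z2).prod N

lemma mem_lift1 {N : Subgroup G} {p : Z2 × G} : p ∈ lift1 N ↔ p.1 = 1 ∧ p.2 ∈ N := by
  simp [lift1, Subgroup.mem_prod, Subgroup.mem_bot]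

def lift2 (N M : Subgroup G) (h : Pind N M) : Subgroup (Z2 × G) where
  carrier := {p | p.2 ∈ M ∧ (p.2 ∈ N ↔ (p.1 = 1 ∨ M = N))}
  one_mem' := by
    exact ⟨M.one_mem, by simp [N.one_mem]⟩
  mul_mem' := by
    rintro ⟨ε, x⟩ ⟨δ, y⟩ ⟨hxM, hx⟩ ⟨hyM, hy⟩
    refine ⟨M.mul_mem hxM hyM, ?_⟩
    by_cases hMN : M = N
    · simp only [hMN, or_true, iff_true] at hx hy ⊢
      exact N.mul_mem hx hy
    · simp only [hMN, or_false] at hx hy ⊢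
      show x * y ∈ N ↔ ε * δ = 1
      rcases Z2cases ε with hε | hε <;> rcases Z2cases δ with hδ | hδ <;>
        subst hε <;> subst hδ
      · exact iff_of_true (N.mul_mem (hx.mpr rfl) (hy.mpr rfl)) rfl
      · refine iff_of_false ?_ (by decide)
        intro hxy
        exact g2_ne_one (hy.mp (by simpa using N.mul_mem (N.inv_mem (hx.mpr rfl)) hxy))
      · refine iff_of_false ?_ (by decide)
        intro hxy
        exact g2_ne_one (hx.mp (by simpa using N.mul_mem hxy (N.inv_mem (hy.mpr rfl))))
      · refine iff_of_true ?_ (by decide)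
        refine h.2 x y hxM hyM ?_ ?_
        · intro hxN; exact g2_ne_one (hx.mp hxN)
        · intro hyN; exact g2_ne_one (hy.mp hyN)
  inv_mem' := by
    rintro ⟨ε, x⟩ ⟨hxM, hx⟩
    refine ⟨M.inv_mem hxM, ?_⟩
    simpa [inv_eq_one] using hx

lemma mem_lift2 {N M : Subgroup G} {h : Pind N M} {p : Z2 × G} :
    p ∈ lift2 N M h ↔ p.2 ∈ M ∧ (p.2 ∈ N ↔ (p.1 = 1 ∨ M = N)) := Iff.rfl

/-- The combined enumeration map. -/
def bigMap : (Subgroup G) ⊕ {p : Subgroup G × Subgroup G // Pind p.1 p.2} →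
    Subgroup (Z2 × G)
  | Sum.inl N => lift1 N
  | Sum.inr ⟨⟨N, M⟩, h⟩ => lift2 N M h

lemma lift2_exists_g2 (N M : Subgroup G) (h : Pind N M) :
    ∃ x, (g2, x) ∈ lift2 N M h := by
  by_cases hMN : M = N
  · exact ⟨1, M.one_mem, by simp [hMN, N.one_mem]⟩
  · have : ∃ x ∈ M, x ∉ N := by
      by_contra hc
      push_neg at hc
      exact hMN (le_antisymm hc h.1)
    obtain ⟨x, hxM, hxN⟩ := this
    exact ⟨x, hxM, by simp [hxN, hMN, g2_ne_one]⟩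

lemma mem_N_lift2 (N M : Subgroup G) (h : Pind N M) (x : G) :
    (((1 : Z2), x) ∈ lift2 N M h) ↔ x ∈ N := by
  rw [mem_lift2]
  constructor
  · rintro ⟨_, hx⟩; exact hx.mpr (Or.inl rfl)
  · intro hx; exact ⟨h.1 hx, iff_of_true hx (Or.inl rfl)⟩

lemma mem_M_lift2 (N M : Subgroup G) (h : Pind N M) (x : G) :
    ((((1 : Z2), x) ∈ lift2 N M h) ∨ ((g2, x) ∈ lift2 N M h)) ↔ x ∈ M := by
  constructor
  · rintro (⟨hx, _⟩ | ⟨hx, _⟩) <;> exact hx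
  · intro hxM
    by_cases hxN : x ∈ N
    · exact Or.inl ((mem_N_lift2 N M h x).mpr hxN)
    · right
      refine ⟨hxM, ?_⟩
      have hMN : M ≠ N := fun hMN => hxN (hMN ▸ hxM)
      exact iff_of_false hxN (by simp [hMN, g2_ne_one])

lemma g2_inv : (g2)⁻¹ = g2 := by decide

theorem bigMap_bijective : Function.Bijective (bigMap (G := G)) := by
  constructor
  · rintro (N | ⟨⟨N, M⟩, h⟩) (N' | ⟨⟨N', M'⟩, h'⟩) heq <;> simp only [bigMap] at heq
    · -- lift1 = lift1
      congr 1
      ext x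
      have := Subgroup.ext_iff.mp heq ((1 : Z2), x)
      simpa [mem_lift1] using this
    · -- lift1 = lift2 : impossible
      exfalso
      obtain ⟨x, hx⟩ := lift2_exists_g2 N' M' h'
      have : (g2, x) ∈ lift1 N := heq ▸ hx
      exact g2_ne_one (mem_lift1.mp this).1
    · exfalso
      obtain ⟨x, hx⟩ := lift2_exists_g2 N M h
      have : (g2, x) ∈ lift1 N' := heq ▸ hx
      exact g2_ne_one (mem_lift1.mp this).1
    · -- lift2 = lift2
      have hN : N = N' := by
        ext x
        rw [← mem_N_lift2 N M h x, ← mem_N_lift2 N' M' h' x, heq]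
      have hM : M = M' := by
        ext x
        rw [← mem_M_lift2 N M h x, ← mem_M_lift2 N' M' h' x, heq]
      subst hN; subst hM
      rfl
  · intro H
    set N : Subgroup G := H.comap ((1 : G →* Z2).prod (MonoidHom.id G)) with hNdef
    have memN : ∀ x : G, x ∈ N ↔ ((1 : Z2), x) ∈ H := fun x => Iff.rfl
    set M : Subgroup G := H.map (MonoidHom.snd Z2 G) with hMdef
    have memM : ∀ x : G, x ∈ M ↔ ∃ ε : Z2, (ε, x) ∈ H := by
      intro x
      constructor
      · rintro ⟨⟨ε, y⟩, hy, rfl⟩; exact ⟨ε, hy⟩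
      · rintro ⟨ε, hε⟩; exact ⟨(ε, x), hε, rfl⟩
    by_cases hA : ∀ p ∈ H, (p.1 : Z2) = 1
    · refine ⟨Sum.inl N, ?_⟩
      show lift1 N = H
      ext ⟨ε, x⟩
      rw [mem_lift1]
      constructor
      · rintro ⟨hε, hx⟩
        cases hε
        exact (memN x).mp hx
      · intro hp
        have hε := hA _ hp
        refine ⟨hε, (memN x).mpr ?_⟩
        cases hε
        exact hp
    · push_neg at hA
      obtain ⟨⟨ε0, x0⟩, hp0, hε0⟩ := hA
      have hε0' : ε0 = g2 := (Z2cases ε0).resolve_left hε0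
      subst hε0'
      have key : ∀ x : G, x ∈ M → x ∉ N → (g2, x) ∈ H := by
        intro x hxM hxN
        obtain ⟨ε, hε⟩ := (memM x).mp hxM
        rcases Z2cases ε with h1 | h1
        · exact absurd ((memN x).mpr (h1 ▸ hε)) hxN
        · exact h1 ▸ hε
      have hNM : N ≤ M := fun x hx => (memM x).mpr ⟨1, (memN x).mp hx⟩
      have hPind : Pind N M := by
        refine ⟨hNM, fun x y hxM hyM hxN hyN => ?_⟩
        have := H.mul_mem (key x hxM hxN) (key y hyM hyN)
        rw [Prod.mk_mul_mk, g2_mul_g2] at this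
        exact (memN _).mpr this
      refine ⟨Sum.inr ⟨⟨N, M⟩, hPind⟩, ?_⟩
      show lift2 N M hPind = H
      by_cases hMN : M = N
      · have hg1 : (g2, (1 : G)) ∈ H := by
          have hx0N : x0 ∈ N := hMN ▸ (memM x0).mpr ⟨g2, hp0⟩
          have h1 : ((1 : Z2), x0) ∈ H := (memN x0).mp hx0N
          have := H.mul_mem hp0 (H.inv_mem h1)
          simpa [g2_mul_g2] using this
        ext ⟨ε, x⟩
        rw [mem_lift2]
        constructor
        · rintro ⟨hxM, _⟩
          have hxN : x ∈ N := hMN ▸ hxM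
          have h1 : ((1 : Z2), x) ∈ H := (memN x).mp hxN
          rcases Z2cases ε with h2 | h2 <;> subst h2
          · exact h1
          · have := H.mul_mem hg1 h1
            simpa using this
        · intro hp
          have hxM : x ∈ M := (memM x).mpr ⟨ε, hp⟩
          exact ⟨hxM, iff_of_true (hMN ▸ hxM) (Or.inr hMN)⟩
      · have hg1 : (g2, (1 : G)) ∉ H := by
          intro hg1
          apply hMN
          refine le_antisymm ?_ hNM
          intro x hxM
          obtain ⟨ε, hε⟩ := (memM x).mp hxM
          rcases Z2cases ε with h1 | h1 <;> subst h1
          · exact (memN x).mpr hε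
          · have := H.mul_mem hg1 hε
            rw [Prod.mk_mul_mk, g2_mul_g2, one_mul] at this
            exact (memN x).mpr this
        ext ⟨ε, x⟩
        rw [mem_lift2]
        constructor
        · rintro ⟨hxM, hiff⟩
          simp only [hMN, or_false] at hiff
          rcases Z2cases ε with h1 | h1 <;> subst h1
          · exact (memN x).mp (hiff.mpr rfl)
          · exact key x hxM (fun hxN => g2_ne_one (hiff.mp hxN))
        · intro hp
          have hxM : x ∈ M := (memM x).mpr ⟨ε, hp⟩
          refine ⟨hxM, ?_⟩
          simp only [hMN, or_false]
          rcases Z2cases ε with h1 | h1 <;> subst h1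
          · exact iff_of_true ((memN x).mpr hp) rfl
          · refine iff_of_false ?_ g2_ne_one
            intro hxN
            have h1 : ((1 : Z2), x) ∈ H := (memN x).mp hxN
            have := H.mul_mem hp (H.inv_mem h1)
            rw [Prod.inv_mk, Prod.mk_mul_mk, inv_one, mul_one, mul_inv_cancel] at this
            exact hg1 this

theorem card_subgroup_prod_eq (G : Type*) [Group G] [Finite G] :
    Nat.card (Subgroup (Z2 × G)) =
      Nat.card (Subgroup G) + Nat.card {p : Subgroup G × Subgroup G // Pind p.1 p.2} := by
  rw [← Nat.card_sum]
  exact (Nat.card_eq_of_bijective _ bigMap_bijective).symm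



/-! ### AddSubgroups of `ZMod (2^k)` -/

variable {k : ℕ}

/-- The additive subgroup of `ZMod (2^k)` generated by `2^j`. -/
def Zs (k j : ℕ) : AddSubgroup (ZMod (2 ^ k)) :=
  AddSubgroup.zmultiples ((2 ^ j : ℕ) : ZMod (2 ^ k))

lemma mem_Zs_int {j : ℕ} (hj : j ≤ k) (t : ℤ) :
    ((t : ℤ) : ZMod (2 ^ k)) ∈ Zs k j ↔ (2 ^ j : ℤ) ∣ t := by
  constructor
  · rintro ⟨z, hz⟩
    have hz' : ((z * 2 ^ j : ℤ) : ZMod (2 ^ k)) = ((t : ℤ) : ZMod (2 ^ k)) := by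
      push_cast
      rw [← hz]
      push_cast [zsmul_eq_mul]
      ring
    rw [ZMod.intCast_eq_intCast_iff] at hz'
    have hdvd : ((2 : ℤ) ^ k) ∣ z * 2 ^ j - t := by
      have := Int.ModEq.dvd hz'.symm
      simpa using this
    have h1 : ((2 : ℤ) ^ j) ∣ z * 2 ^ j - t :=
      dvd_trans (pow_dvd_pow 2 hj) hdvd
    have h2 : ((2 : ℤ) ^ j) ∣ z * 2 ^ j := dvd_mul_left _ _
    have := dvd_sub h2 h1
    simpa using this
  · rintro ⟨u, rfl⟩
    refine ⟨u, ?_⟩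
    push_cast [zsmul_eq_mul]
    ring

lemma intCast_val_eq (a : ZMod (2 ^ k)) : (((a.val : ℤ) : ZMod (2 ^ k))) = a := by
  haveI : NeZero (2 ^ k) := ⟨pow_ne_zero _ two_ne_zero⟩
  push_cast
  exact ZMod.natCast_rightInverse a

lemma mem_Zs {j : ℕ} (hj : j ≤ k) (a : ZMod (2 ^ k)) :
    a ∈ Zs k j ↔ (2 ^ j : ℤ) ∣ (a.val : ℤ) := by
  conv_lhs => rw [← intCast_val_eq a]
  exact mem_Zs_int hj _

/-- Classification of additive subgroups of `ZMod (2^k)`. -/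
theorem addsubgroup_classify (A : AddSubgroup (ZMod (2 ^ k))) :
    ∃ j ≤ k, A = Zs k j := by
  haveI : NeZero (2 ^ k) := ⟨pow_ne_zero _ two_ne_zero⟩
  set φ : ℤ →+ ZMod (2 ^ k) := (Int.castRingHom (ZMod (2 ^ k))).toAddMonoidHom with hφ
  have hφs : Function.Surjective φ := ZMod.intCast_surjective
  obtain ⟨g, hg⟩ := Int.subgroup_cyclic (A.comap φ)
  have hgq : (2 ^ k : ℤ) ∈ AddSubgroup.closure ({g} : Set ℤ) := by
    rw [← hg]
    show φ (2 ^ k : ℤ) ∈ A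
    have h0 : φ (2 ^ k : ℤ) = 0 := by
      show ((2 ^ k : ℤ) : ZMod (2 ^ k)) = 0
      rw [show ((2 ^ k : ℤ) : ZMod (2 ^ k)) = ((2 ^ k : ℕ) : ZMod (2 ^ k)) by push_cast; ring,
        ZMod.natCast_self]
    rw [h0]; exact A.zero_mem
  rw [← AddSubgroup.zmultiples_eq_closure] at hg hgq
  obtain ⟨c, hc⟩ := hgq
  have hdvd : g ∣ (2 ^ k : ℤ) := Dvd.intro_left c (by rw [← hc]; simp [zsmul_eq_mul])
  have hnat : g.natAbs ∣ 2 ^ k := by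
    have := Int.natAbs_dvd_natAbs.mpr hdvd
    rw [Int.natAbs_pow] at this
    exact this
  obtain ⟨j, hj, hja⟩ := (Nat.dvd_prime_pow Nat.prime_two).mp hnat
  refine ⟨j, hj, ?_⟩
  have hAmap : A = (A.comap φ).map φ :=
    (AddSubgroup.map_comap_eq_self_of_surjective hφs A).symm
  have hg2 : AddSubgroup.zmultiples g = AddSubgroup.zmultiples ((g.natAbs : ℤ)) := by
    ext b
    simp [Int.mem_zmultiples_iff, Int.natAbs_dvd]
  rw [hAmap, hg, hg2, AddMonoidHom.map_zmultiples]
  show AddSubgroup.zmultiples (((g.natAbs : ℤ) : ZMod (2 ^ k))) = _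
  rw [hja]
  congr 1
  push_cast
  ring


/-! ### Subgroups of dihedral groups -/

open DihedralGroup

variable {n : ℕ}

/-- The "rotation" subgroup associated to an additive subgroup of `ZMod n`. -/
def rotS (A : AddSubgroup (ZMod n)) : Subgroup (DihedralGroup n) where
  carrier := {x | ∃ a ∈ A, x = r a}
  one_mem' := ⟨0, A.zero_mem, one_def⟩
  mul_mem' := by
    rintro x y ⟨a, ha, rfl⟩ ⟨b, hb, rfl⟩
    exact ⟨a + b, A.add_mem ha hb, by rw [r_mul_r]⟩
  inv_mem' := by
    rintro x ⟨a, ha, rfl⟩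
    exact ⟨-a, A.neg_mem ha, rfl⟩

/-- The "dihedral" subgroup associated to an additive subgroup `A` of `ZMod n` and a
reflection offset `i`. -/
def dihS (A : AddSubgroup (ZMod n)) (i : ZMod n) : Subgroup (DihedralGroup n) where
  carrier := {x | (∃ a ∈ A, x = r a) ∨ (∃ a ∈ A, x = sr (i + a))}
  one_mem' := Or.inl ⟨0, A.zero_mem, one_def⟩
  mul_mem' := by
    rintro x y (⟨a, ha, rfl⟩ | ⟨a, ha, rfl⟩) (⟨b, hb, rfl⟩ | ⟨b, hb, rfl⟩)
    · exact Or.inl ⟨a + b, A.add_mem ha hb, by rw [r_mul_r]⟩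
    · exact Or.inr ⟨b - a, A.sub_mem hb ha, by rw [r_mul_sr]; ring_nf⟩
    · exact Or.inr ⟨a + b, A.add_mem ha hb, by rw [sr_mul_r]; ring_nf⟩
    · exact Or.inl ⟨b - a, A.sub_mem hb ha, by rw [sr_mul_sr]; ring_nf⟩
  inv_mem' := by
    rintro x (⟨a, ha, rfl⟩ | ⟨a, ha, rfl⟩)
    · exact Or.inl ⟨-a, A.neg_mem ha, rfl⟩
    · exact Or.inr ⟨a, ha, rfl⟩

@[simp] lemma r_mem_rotS {A : AddSubgroup (ZMod n)} {t : ZMod n} :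
    r t ∈ rotS A ↔ t ∈ A := by
  constructor
  · rintro ⟨a, ha, h⟩
    obtain rfl : t = a := by injection h
    exact ha
  · intro h; exact ⟨t, h, rfl⟩

@[simp] lemma sr_not_mem_rotS {A : AddSubgroup (ZMod n)} {t : ZMod n} :
    sr t ∉ rotS A := by
  rintro ⟨a, _, h⟩
  exact nomatch h

@[simp] lemma r_mem_dihS {A : AddSubgroup (ZMod n)} {i t : ZMod n} :
    r t ∈ dihS A i ↔ t ∈ A := by
  constructor
  · rintro (⟨a, ha, h⟩ | ⟨a, _, h⟩)
    · obtain rfl : t = a := by injection h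
      exact ha
    · exact nomatch h
  · intro h; exact Or.inl ⟨t, h, rfl⟩

@[simp] lemma sr_mem_dihS {A : AddSubgroup (ZMod n)} {i t : ZMod n} :
    sr t ∈ dihS A i ↔ t - i ∈ A := by
  constructor
  · rintro (⟨a, _, h⟩ | ⟨a, ha, h⟩)
    · exact nomatch h
    · obtain rfl : t = i + a := by injection h
      simpa using ha
  · intro h
    exact Or.inr ⟨t - i, h, by ring_nf⟩

/-- The rotation part of a subgroup of the dihedral group. -/
def rotpart (H : Subgroup (DihedralGroup n)) : AddSubgroup (ZMod n) where
  carrier := {a | r a ∈ H}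
  zero_mem' := by simpa [← one_def] using H.one_mem
  add_mem' := by
    intro a b ha hb
    have := H.mul_mem ha hb
    rwa [r_mul_r] at this
  neg_mem' := by
    intro a ha
    have := H.inv_mem ha
    rwa [show (r a)⁻¹ = r (-a) from rfl] at this

@[simp] lemma mem_rotpart {H : Subgroup (DihedralGroup n)} {a : ZMod n} :
    a ∈ rotpart H ↔ r a ∈ H := Iff.rfl

/-- Classification of subgroups of the dihedral group. -/
theorem dihedral_subgroup_classify (H : Subgroup (DihedralGroup n)) :
    H = rotS (rotpart H) ∨ ∃ i, H = dihS (rotpart H) i := by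
  by_cases hs : ∃ i, sr i ∈ H
  · obtain ⟨i, hi⟩ := hs
    right
    refine ⟨i, ?_⟩
    ext x
    cases x with
    | r a => simp [mem_rotpart]
    | sr b =>
      rw [sr_mem_dihS, mem_rotpart]
      constructor
      · intro hb
        have h1 := H.mul_mem hb (H.inv_mem hi)
        rw [show (sr i)⁻¹ = sr i from rfl, sr_mul_sr] at h1
        have h2 := H.inv_mem h1
        rwa [show (r (i - b))⁻¹ = r (-(i - b)) from rfl, neg_sub] at h2
      · intro hb
        have := H.mul_mem hi hb
        rwa [sr_mul_r, add_sub_cancel] at this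
  · left
    push_neg at hs
    ext x
    cases x with
    | r a => simp [mem_rotpart]
    | sr b => simp [hs b]


/-! ### Comparison lemmas -/

section Comparisons
variable {n : ℕ} {A B : AddSubgroup (ZMod n)} {i i' : ZMod n}

lemma rotS_le_rotS : rotS A ≤ rotS B ↔ A ≤ B := by
  constructor
  · intro h a ha
    exact r_mem_rotS.mp (h (r_mem_rotS.mpr ha))
  · rintro h x ⟨a, ha, rfl⟩
    exact ⟨a, h ha, rfl⟩

lemma rotS_le_dihS : rotS A ≤ dihS B i ↔ A ≤ B := by
  constructor
  · intro h a ha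
    exact r_mem_dihS.mp (h (r_mem_rotS.mpr ha))
  · rintro h x ⟨a, ha, rfl⟩
    exact r_mem_dihS.mpr (h ha)

lemma not_dihS_le_rotS : ¬ dihS A i ≤ rotS B := by
  intro h
  exact sr_not_mem_rotS (h (sr_mem_dihS.mpr (by rw [sub_self]; exact A.zero_mem)))

lemma dihS_le_dihS : dihS A i ≤ dihS B i' ↔ A ≤ B ∧ i - i' ∈ B := by
  constructor
  · intro h
    refine ⟨fun a ha => r_mem_dihS.mp (h (r_mem_dihS.mpr ha)), ?_⟩
    exact sr_mem_dihS.mp (h (sr_mem_dihS.mpr (by rw [sub_self]; exact A.zero_mem)))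
  · rintro ⟨hAB, hii⟩ x hx
    cases x with
    | r a => exact r_mem_dihS.mpr (hAB (r_mem_dihS.mp hx))
    | sr t =>
      rw [sr_mem_dihS] at hx ⊢
      have := B.add_mem (hAB hx) hii
      rwa [sub_add_sub_cancel] at this

lemma rotS_injEq : rotS A = rotS B ↔ A = B := by
  constructor
  · intro h
    exact le_antisymm (rotS_le_rotS.mp h.le) (rotS_le_rotS.mp h.ge)
  · rintro rfl; rfl

lemma rotS_ne_dihS : rotS A ≠ dihS B i := by
  intro h
  exact not_dihS_le_rotS (h ▸ le_refl (rotS A) : dihS B i ≤ rotS A)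

lemma dihS_eq_dihS : dihS A i = dihS B i' ↔ A = B ∧ i - i' ∈ B := by
  constructor
  · intro h
    have h1 := dihS_le_dihS.mp h.le
    have h2 := dihS_le_dihS.mp h.ge
    exact ⟨le_antisymm h1.1 h2.1, h1.2⟩
  · rintro ⟨rfl, hii⟩
    refine le_antisymm (dihS_le_dihS.mpr ⟨le_rfl, hii⟩) (dihS_le_dihS.mpr ⟨le_rfl, ?_⟩)
    have := A.neg_mem hii
    rwa [neg_sub] at this

end Comparisons

/-! ### Ordering of the `Zs` -/

section ZsOrder
variable {k : ℕ}

lemma pow_mem_Zs_iff {j j' : ℕ} (hj : j ≤ k) :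
    ((2 ^ j' : ℕ) : ZMod (2 ^ k)) ∈ Zs k j ↔ j ≤ j' := by
  have e : ((2 ^ j' : ℕ) : ZMod (2 ^ k)) = (((2 ^ j' : ℤ)) : ZMod (2 ^ k)) := by
    push_cast; ring
  rw [e, mem_Zs_int hj,
    show ((2 : ℤ) ^ j) = ((2 ^ j : ℕ) : ℤ) by push_cast; ring,
    show ((2 : ℤ) ^ j') = ((2 ^ j' : ℕ) : ℤ) by push_cast; ring,
    Int.natCast_dvd_natCast, Nat.pow_dvd_pow_iff_le_right one_lt_two]

lemma Zs_le_Zs {j j' : ℕ} (hj : j ≤ k) (hj' : j' ≤ k) :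
    Zs k j ≤ Zs k j' ↔ j' ≤ j := by
  constructor
  · intro h
    exact (pow_mem_Zs_iff hj').mp (h ((pow_mem_Zs_iff hj).mpr le_rfl))
  · intro h a ha
    rw [mem_Zs hj] at ha
    rw [mem_Zs hj']
    exact dvd_trans (pow_dvd_pow 2 h) ha

lemma Zs_inj {j j' : ℕ} (hj : j ≤ k) (hj' : j' ≤ k) (h : Zs k j = Zs k j') : j = j' :=
  le_antisymm ((Zs_le_Zs hj' hj).mp h.ge) ((Zs_le_Zs hj hj').mp h.le)

lemma cast_sub_mem_Zs_iff {j : ℕ} (hj : j ≤ k) {i i' : ℕ} (h1 : i < 2 ^ j) (h2 : i' < 2 ^ j) :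
    ((i : ZMod (2 ^ k)) - (i' : ZMod (2 ^ k)) ∈ Zs k j) ↔ i = i' := by
  have e : ((((i : ℤ) - (i' : ℤ)) : ℤ) : ZMod (2 ^ k)) = (i : ZMod (2 ^ k)) - (i' : ZMod (2 ^ k)) := by
    push_cast; ring
  rw [← e, mem_Zs_int hj]
  have hX : ((2 : ℤ) ^ j) = ((2 ^ j : ℕ) : ℤ) := by push_cast; ring
  constructor
  · intro h
    have h0 : (i : ℤ) - (i' : ℤ) = 0 := by
      refine Int.eq_zero_of_abs_lt_dvd h ?_
      rw [abs_lt]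
      constructor <;> [rw [hX]; rw [hX]] <;> omega
    omega
  · rintro rfl
    simp

lemma dihS_canon {k j : ℕ} (hj : j ≤ k) (i0 : ZMod (2 ^ k)) :
    ∃ i : ℕ, i < 2 ^ j ∧ dihS (Zs k j) i0 = dihS (Zs k j) ((i : ℕ) : ZMod (2 ^ k)) := by
  refine ⟨i0.val % 2 ^ j, Nat.mod_lt _ (pow_pos two_pos j), ?_⟩
  rw [dihS_eq_dihS]
  refine ⟨rfl, ?_⟩
  have h1 : i0.val % 2 ^ j ≤ i0.val := Nat.mod_le _ _
  have hv : ((i0.val : ℕ) : ZMod (2 ^ k)) = i0 := by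
    have := intCast_val_eq (k := k) i0
    rwa [Int.cast_natCast] at this
  have e : (((i0.val - i0.val % 2 ^ j : ℕ) : ℤ) : ZMod (2 ^ k)) =
      i0 - ((i0.val % 2 ^ j : ℕ) : ZMod (2 ^ k)) := by
    rw [Int.cast_natCast, Nat.cast_sub h1, hv]
  rw [← e, mem_Zs_int hj,
    show ((2 : ℤ) ^ j) = ((2 ^ j : ℕ) : ℤ) by push_cast; ring,
    Int.natCast_dvd_natCast]
  exact Nat.dvd_sub_mod _

lemma subgroup_classify' {k : ℕ} (H : Subgroup (DihedralGroup (2 ^ k))) :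
    (∃ j ≤ k, H = rotS (Zs k j)) ∨
      (∃ j ≤ k, ∃ i < 2 ^ j, H = dihS (Zs k j) ((i : ℕ) : ZMod (2 ^ k))) := by
  obtain ⟨j, hj, hA⟩ := addsubgroup_classify (rotpart H)
  rcases dihedral_subgroup_classify H with h | ⟨i0, h⟩
  · left; exact ⟨j, hj, by rw [h, hA]⟩
  · right
    obtain ⟨i, hi, he⟩ := dihS_canon hj i0
    exact ⟨j, hj, i, hi, by rw [h, hA, he]⟩

end ZsOrder

/-! ### Pind facts -/


section PindFacts
variable {k : ℕ}

lemma pind_self {G : Type*} [Group G] (N : Subgroup G) : Pind N N :=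
  ⟨le_rfl, fun x _ hx _ hxn _ => absurd hx hxn⟩

lemma mem_Zs_succ_of_two {j : ℕ} (hj : j + 1 ≤ k) {a b : ZMod (2 ^ k)}
    (ha : a ∈ Zs k j) (ha2 : a ∉ Zs k (j + 1)) (hb : b ∈ Zs k j) (hb2 : b ∉ Zs k (j + 1)) :
    a + b ∈ Zs k (j + 1) ∧ a - b ∈ Zs k (j + 1) := by
  have hj' : j ≤ k := by omega
  rw [mem_Zs hj'] at ha hb
  rw [mem_Zs hj] at ha2 hb2
  obtain ⟨u, hu⟩ := ha
  obtain ⟨v, hv⟩ := hb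
  have h2u : ¬ (2 : ℤ) ∣ u := by
    intro ⟨w, hw⟩
    exact ha2 ⟨w, by rw [hu, hw, pow_succ]; ring⟩
  have h2v : ¬ (2 : ℤ) ∣ v := by
    intro ⟨w, hw⟩
    exact hb2 ⟨w, by rw [hv, hw, pow_succ]; ring⟩
  have ea : ((((a.val : ℤ) + (b.val : ℤ)) : ℤ) : ZMod (2 ^ k)) = a + b := by
    rw [Int.cast_add, intCast_val_eq, intCast_val_eq]
  have es : ((((a.val : ℤ) - (b.val : ℤ)) : ℤ) : ZMod (2 ^ k)) = a - b := by
    rw [Int.cast_sub, intCast_val_eq, intCast_val_eq]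
  constructor
  · rw [← ea, mem_Zs_int hj, hu, hv, pow_succ,
      show (2 : ℤ) ^ j * u + 2 ^ j * v = 2 ^ j * (u + v) by ring]
    exact mul_dvd_mul_left _ (by omega)
  · rw [← es, mem_Zs_int hj, hu, hv, pow_succ,
      show (2 : ℤ) ^ j * u - 2 ^ j * v = 2 ^ j * (u - v) by ring]
    exact mul_dvd_mul_left _ (by omega)

/-- Family 2: `(rotS (Zs (j+1)), rotS (Zs j))`. -/
lemma pind_rot_rot {j : ℕ} (hj : j + 1 ≤ k) :
    Pind (rotS (Zs k (j + 1))) (rotS (Zs k j)) := by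
  refine ⟨rotS_le_rotS.mpr ((Zs_le_Zs hj (by omega)).mpr (by omega)), ?_⟩
  rintro x y hx hy hxn hyn
  rcases x with a | a
  · rcases y with b | b
    · rw [r_mem_rotS] at hx hxn
      rw [r_mem_rotS] at hy hyn
      rw [r_mul_r, r_mem_rotS]
      exact (mem_Zs_succ_of_two hj hx hxn hy hyn).1
    · exact absurd hy sr_not_mem_rotS
  · exact absurd hx sr_not_mem_rotS

/-- Family 3: `(rotS (Zs j), dihS (Zs j) i)`. -/
lemma pind_rot_dih {j : ℕ} (i : ZMod (2 ^ k)) :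
    Pind (rotS (Zs k j)) (dihS (Zs k j) i) := by
  refine ⟨rotS_le_dihS.mpr le_rfl, ?_⟩
  rintro x y hx hy hxn hyn
  rcases x with a | s
  · exact absurd (r_mem_rotS.mpr (r_mem_dihS.mp hx)) hxn
  · rcases y with b | t
    · exact absurd (r_mem_rotS.mpr (r_mem_dihS.mp hy)) hyn
    · rw [sr_mem_dihS] at hx hy
      rw [sr_mul_sr, r_mem_rotS]
      have := (Zs k j).sub_mem hy hx
      rwa [sub_sub_sub_cancel_right] at this

/-- Family 5: `(dihS (Zs (j+1)) i, dihS (Zs j) i')` where `i - i' ∈ Zs k j`. -/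
lemma pind_dih_dih {j : ℕ} (hj : j + 1 ≤ k) (i i' : ZMod (2 ^ k))
    (hii : i - i' ∈ Zs k j) :
    Pind (dihS (Zs k (j + 1)) i) (dihS (Zs k j) i') := by
  have hj' : j ≤ k := by omega
  have hZ : Zs k (j + 1) ≤ Zs k j := (Zs_le_Zs hj hj').mpr (by omega)
  refine ⟨dihS_le_dihS.mpr ⟨hZ, hii⟩, ?_⟩
  rintro x y hx hy hxn hyn
  rcases x with a | s
  · rw [r_mem_dihS] at hx hxn
    rcases y with b | t
    · rw [r_mem_dihS] at hy hyn
      rw [r_mul_r, r_mem_dihS]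
      exact (mem_Zs_succ_of_two hj hx hxn hy hyn).1
    · rw [sr_mem_dihS] at hy hyn
      have htj : t - i ∈ Zs k j := by
        have := (Zs k j).sub_mem hy hii
        rwa [sub_sub_sub_cancel_right] at this
      rw [r_mul_sr, sr_mem_dihS]
      have e : t - a - i = (t - i) - a := by ring
      rw [e]
      exact (mem_Zs_succ_of_two hj htj hyn hx hxn).2
  · rw [sr_mem_dihS] at hx hxn
    have hsj : s - i ∈ Zs k j := by
      have := (Zs k j).sub_mem hx hii
      rwa [sub_sub_sub_cancel_right] at this
    rcases y with b | t
    · rw [r_mem_dihS] at hy hyn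
      rw [sr_mul_r, sr_mem_dihS]
      have e : s + b - i = (s - i) + b := by ring
      rw [e]
      exact (mem_Zs_succ_of_two hj hsj hxn hy hyn).1
    · rw [sr_mem_dihS] at hy hyn
      have htj : t - i ∈ Zs k j := by
        have := (Zs k j).sub_mem hy hii
        rwa [sub_sub_sub_cancel_right] at this
      rw [sr_mul_sr, r_mem_dihS]
      have e : t - s = (t - i) - (s - i) := by ring
      rw [e]
      exact (mem_Zs_succ_of_two hj htj hyn hsj hxn).2

end PindFacts

/-! ### Enumerations -/

section Enum
variable {k : ℕ}

lemma dih_canon_inj {j j' i i' : ℕ} (hj : j ≤ k) (hj' : j' ≤ k)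
    (hi : i < 2 ^ j) (hi' : i' < 2 ^ j')
    (h : dihS (Zs k j) ((i : ℕ) : ZMod (2 ^ k)) = dihS (Zs k j') ((i' : ℕ) : ZMod (2 ^ k))) :
    j = j' ∧ i = i' := by
  obtain ⟨hZ, hsub⟩ := dihS_eq_dihS.mp h
  obtain rfl : j = j' := Zs_inj hj hj' hZ
  exact ⟨rfl, (cast_sub_mem_Zs_iff hj hi hi').mp hsub⟩

lemma cast_mod_sub_mem {j : ℕ} (hj : j ≤ k) (i : ℕ) :
    ((i : ℕ) : ZMod (2 ^ k)) - ((i % 2 ^ j : ℕ) : ZMod (2 ^ k)) ∈ Zs k j := by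
  have e : (((i - i % 2 ^ j : ℕ) : ℤ) : ZMod (2 ^ k)) =
      ((i : ℕ) : ZMod (2 ^ k)) - ((i % 2 ^ j : ℕ) : ZMod (2 ^ k)) := by
    rw [Int.cast_natCast, Nat.cast_sub (Nat.mod_le _ _)]
  rw [← e, mem_Zs_int hj,
    show ((2 : ℤ) ^ j) = ((2 ^ j : ℕ) : ℤ) by push_cast; ring, Int.natCast_dvd_natCast]
  exact Nat.dvd_sub_mod _

lemma canon_mod {j' : ℕ} (hj' : j' ≤ k) {i i' : ℕ} (hi' : i' < 2 ^ j')
    (h : ((i : ℕ) : ZMod (2 ^ k)) - ((i' : ℕ) : ZMod (2 ^ k)) ∈ Zs k j') :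
    i' = i % 2 ^ j' := by
  have e : ((((i : ℤ) - (i' : ℤ)) : ℤ) : ZMod (2 ^ k)) =
      ((i : ℕ) : ZMod (2 ^ k)) - ((i' : ℕ) : ZMod (2 ^ k)) := by push_cast; ring
  rw [← e, mem_Zs_int hj'] at h
  have h2 : (2 : ℤ) ^ j' ∣ (i : ℤ) - (i % 2 ^ j' : ℕ) := by
    rw [show ((i : ℤ) - (i % 2 ^ j' : ℕ)) = ((i - i % 2 ^ j' : ℕ) : ℤ) by
      push_cast [Nat.mod_le]; ring,
      show ((2 : ℤ) ^ j') = ((2 ^ j' : ℕ) : ℤ) by push_cast; ring, Int.natCast_dvd_natCast]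
    exact Nat.dvd_sub_mod _
  have h3 : (2 : ℤ) ^ j' ∣ ((i % 2 ^ j' : ℕ) : ℤ) - (i' : ℤ) := by
    have := dvd_sub h h2
    simpa using this
  have h4 : ((i % 2 ^ j' : ℕ) : ℤ) - (i' : ℤ) = 0 := by
    refine Int.eq_zero_of_abs_lt_dvd h3 ?_
    have hm : i % 2 ^ j' < 2 ^ j' := Nat.mod_lt _ (pow_pos two_pos _)
    rw [abs_lt]
    constructor <;>
      [rw [show ((2:ℤ)^j') = ((2^j' : ℕ) : ℤ) by push_cast; ring];
       rw [show ((2:ℤ)^j') = ((2^j' : ℕ) : ℤ) by push_cast; ring]] <;> omega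
  omega

lemma pind_pow_constraint {j j' : ℕ} (hj : j ≤ k) (hj' : j' ≤ k)
    {N M : Subgroup (DihedralGroup (2 ^ k))}
    (hN : ∀ a, r a ∈ N ↔ a ∈ Zs k j) (hM : ∀ a, r a ∈ M ↔ a ∈ Zs k j')
    (hp : Pind N M) : j ≤ j' + 1 := by
  by_contra hc
  push_neg at hc
  set x : DihedralGroup (2 ^ k) := r (((2 ^ j' : ℕ)) : ZMod (2 ^ k)) with hx
  have hxM : x ∈ M := (hM _).mpr ((pow_mem_Zs_iff hj').mpr le_rfl)
  have hxN : x ∉ N := by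
    intro h
    have := (pow_mem_Zs_iff hj).mp ((hN _).mp h)
    omega
  have hprod := hp.2 x x hxM hxM hxN hxN
  rw [hx, r_mul_r, show (((2 ^ j' : ℕ) : ZMod (2 ^ k)) + ((2 ^ j' : ℕ) : ZMod (2 ^ k)))
      = (((2 ^ (j' + 1) : ℕ)) : ZMod (2 ^ k)) by push_cast; ring] at hprod
  have := (pow_mem_Zs_iff hj).mp ((hN _).mp hprod)
  omega

lemma pind_rot_dih_constraint {j j' : ℕ} (hj : j ≤ k) (hj' : j' ≤ k) (i' : ZMod (2 ^ k))
    (hp : Pind (rotS (Zs k j)) (dihS (Zs k j') i')) : j ≤ j' := by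
  set p : ZMod (2 ^ k) := ((2 ^ j' : ℕ) : ZMod (2 ^ k)) with hpdef
  have hx : sr i' ∈ dihS (Zs k j') i' := sr_mem_dihS.mpr (by rw [sub_self]; exact (Zs k j').zero_mem)
  have hy : sr (i' + p) ∈ dihS (Zs k j') i' := by
    rw [sr_mem_dihS, add_sub_cancel_left]
    exact (pow_mem_Zs_iff hj').mpr le_rfl
  have hprod := hp.2 _ _ hx hy sr_not_mem_rotS sr_not_mem_rotS
  rw [sr_mul_sr, add_sub_cancel_left, r_mem_rotS] at hprod
  exact (pow_mem_Zs_iff hj).mp hprod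

/-- Enumeration of subgroups of `DihedralGroup (2^k)`. -/
def EDty (k : ℕ) := Fin (k + 1) ⊕ (Σ j : Fin (k + 1), Fin (2 ^ (j : ℕ)))

def EDmap : EDty k → Subgroup (DihedralGroup (2 ^ k))
  | Sum.inl j => rotS (Zs k (j : ℕ))
  | Sum.inr ⟨j, i⟩ => dihS (Zs k (j : ℕ)) (((i : ℕ) : ℕ) : ZMod (2 ^ k))

theorem EDmap_bij : Function.Bijective (EDmap (k := k)) := by
  constructor
  · rintro (j | ⟨j, i⟩) (j' | ⟨j', i'⟩) h <;> simp only [EDmap] at h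
    · have := Zs_inj (by omega : (j:ℕ) ≤ k) (by omega : (j':ℕ) ≤ k) (rotS_injEq.mp h)
      congr 1
      exact Fin.ext this
    · exact absurd h rotS_ne_dihS
    · exact absurd h.symm rotS_ne_dihS
    · obtain ⟨h1, h2⟩ := dih_canon_inj (by omega : (j:ℕ) ≤ k) (by omega : (j':ℕ) ≤ k)
        i.isLt i'.isLt h
      congr 1
      obtain rfl : j = j' := Fin.ext h1
      congr 1
      exact Fin.ext h2
  · intro H
    rcases subgroup_classify' H with ⟨j, hj, hH⟩ | ⟨j, hj, i, hi, hH⟩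
    · exact ⟨Sum.inl ⟨j, by omega⟩, hH.symm⟩
    · exact ⟨Sum.inr ⟨⟨j, by omega⟩, ⟨i, hi⟩⟩, hH.symm⟩

/-- Enumeration of index-≤2 pairs of subgroups. -/
def EPty (k : ℕ) := Fin (k + 1) ⊕ Fin k ⊕ (Σ j : Fin (k + 1), Fin (2 ^ (j : ℕ))) ⊕
  (Σ j : Fin (k + 1), Fin (2 ^ (j : ℕ))) ⊕ (Σ j : Fin k, Fin (2 ^ ((j : ℕ) + 1)))

def PairSub (k : ℕ) :=
  {p : Subgroup (DihedralGroup (2 ^ k)) × Subgroup (DihedralGroup (2 ^ k)) // Pind p.1 p.2}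

def EPmap : EPty k → PairSub k
  | Sum.inl j => ⟨(rotS (Zs k (j : ℕ)), rotS (Zs k (j : ℕ))), pind_self _⟩
  | Sum.inr (Sum.inl j) =>
      ⟨(rotS (Zs k ((j : ℕ) + 1)), rotS (Zs k (j : ℕ))), pind_rot_rot (by omega)⟩
  | Sum.inr (Sum.inr (Sum.inl ⟨j, i⟩)) =>
      ⟨(rotS (Zs k (j : ℕ)), dihS (Zs k (j : ℕ)) (((i : ℕ) : ℕ) : ZMod (2 ^ k))),
        pind_rot_dih _⟩
  | Sum.inr (Sum.inr (Sum.inr (Sum.inl ⟨j, i⟩))) =>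
      ⟨(dihS (Zs k (j : ℕ)) (((i : ℕ) : ℕ) : ZMod (2 ^ k)),
        dihS (Zs k (j : ℕ)) (((i : ℕ) : ℕ) : ZMod (2 ^ k))), pind_self _⟩
  | Sum.inr (Sum.inr (Sum.inr (Sum.inr ⟨j, i⟩))) =>
      ⟨(dihS (Zs k ((j : ℕ) + 1)) (((i : ℕ) : ℕ) : ZMod (2 ^ k)),
        dihS (Zs k (j : ℕ)) ((((i : ℕ) % 2 ^ (j : ℕ) : ℕ)) : ZMod (2 ^ k))),
        pind_dih_dih (by omega) _ _ (cast_mod_sub_mem (by omega) _)⟩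

end Enum

section EnumBij
variable {k : ℕ}

theorem EPmap_injective : Function.Injective (EPmap (k := k)) := by
  have jk : ∀ j : Fin (k + 1), (j : ℕ) ≤ k := fun j => by omega
  have modlt : ∀ (i j : ℕ), i % 2 ^ j < 2 ^ j := fun i j => Nat.mod_lt _ (pow_pos two_pos _)
  have c1 : ∀ p q : PairSub k, p = q → p.1.1 = q.1.1 := fun p q e => congrArg (fun z => z.1.1) e
  have c2 : ∀ p q : PairSub k, p = q → p.1.2 = q.1.2 := fun p q e => congrArg (fun z => z.1.2) e
  rintro (j | j | ⟨j, i⟩ | ⟨j, i⟩ | ⟨j, i⟩) (j' | j' | ⟨j', i'⟩ | ⟨j', i'⟩ | ⟨j', i'⟩) h <;>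
    [skip; skip; skip; skip; skip; skip; skip; skip; skip; skip;
     skip; skip; skip; skip; skip; skip; skip; skip; skip; skip;
     skip; skip; skip; skip; skip]
  · exact congrArg Sum.inl (Fin.ext (Zs_inj (jk j) (jk j') (rotS_injEq.mp (c1 _ _ h))))
  · have e1 := Zs_inj (jk j) (by omega) (rotS_injEq.mp (c1 _ _ h))
    have e2 := Zs_inj (jk j) (by omega) (rotS_injEq.mp (c2 _ _ h))
    omega
  · exact absurd (c2 _ _ h) rotS_ne_dihS
  · exact absurd (c1 _ _ h) rotS_ne_dihS
  · exact absurd (c1 _ _ h) rotS_ne_dihS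
  · have e1 := Zs_inj (by omega) (jk j') (rotS_injEq.mp (c1 _ _ h))
    have e2 := Zs_inj (by omega) (jk j') (rotS_injEq.mp (c2 _ _ h))
    omega
  · exact congrArg (Sum.inr ∘ Sum.inl)
      (Fin.ext (Zs_inj (by omega) (by omega) (rotS_injEq.mp (c2 _ _ h))))
  · exact absurd (c2 _ _ h) rotS_ne_dihS
  · exact absurd (c1 _ _ h) rotS_ne_dihS
  · exact absurd (c1 _ _ h) rotS_ne_dihS
  · exact absurd (c2 _ _ h).symm rotS_ne_dihS
  · exact absurd (c2 _ _ h).symm rotS_ne_dihS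
  · obtain ⟨e1, e2⟩ := dih_canon_inj (jk j) (jk j') i.isLt i'.isLt (c2 _ _ h)
    refine congrArg (Sum.inr ∘ Sum.inr ∘ Sum.inl) ?_
    obtain rfl : j = j' := Fin.ext e1
    exact congrArg _ (Fin.ext e2)
  · exact absurd (c1 _ _ h) rotS_ne_dihS
  · exact absurd (c1 _ _ h) rotS_ne_dihS
  · exact absurd (c1 _ _ h).symm rotS_ne_dihS
  · exact absurd (c1 _ _ h).symm rotS_ne_dihS
  · exact absurd (c1 _ _ h).symm rotS_ne_dihS
  · obtain ⟨e1, e2⟩ := dih_canon_inj (jk j) (jk j') i.isLt i'.isLt (c1 _ _ h)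
    refine congrArg (Sum.inr ∘ Sum.inr ∘ Sum.inr ∘ Sum.inl) ?_
    obtain rfl : j = j' := Fin.ext e1
    exact congrArg _ (Fin.ext e2)
  · obtain ⟨e1, _⟩ := dih_canon_inj (jk j) (by omega) i.isLt i'.isLt (c1 _ _ h)
    obtain ⟨e2, _⟩ := dih_canon_inj (jk j) (by omega) i.isLt (modlt _ _) (c2 _ _ h)
    omega
  · exact absurd (c1 _ _ h).symm rotS_ne_dihS
  · exact absurd (c1 _ _ h).symm rotS_ne_dihS
  · exact absurd (c1 _ _ h).symm rotS_ne_dihS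
  · obtain ⟨e1, _⟩ := dih_canon_inj (by omega) (jk j') i.isLt i'.isLt (c1 _ _ h)
    obtain ⟨e2, _⟩ := dih_canon_inj (by omega) (jk j') (modlt _ _) i'.isLt (c2 _ _ h)
    omega
  · obtain ⟨e1, e2⟩ := dih_canon_inj (by omega) (by omega) i.isLt i'.isLt (c1 _ _ h)
    refine congrArg (Sum.inr ∘ Sum.inr ∘ Sum.inr ∘ Sum.inr) ?_
    obtain rfl : j = j' := Fin.ext (by omega)
    exact congrArg _ (Fin.ext e2)

theorem EPmap_surjective : Function.Surjective (EPmap (k := k)) := by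
  rintro ⟨⟨N, M⟩, hp⟩
  rcases subgroup_classify' N with ⟨j, hj, hN⟩ | ⟨j, hj, i, hi, hN⟩ <;>
    rcases subgroup_classify' M with ⟨j', hj', hM⟩ | ⟨j', hj', i', hi', hM⟩ <;>
      subst hN <;> subst hM
  · -- rot / rot
    have hle : j' ≤ j := (Zs_le_Zs hj hj').mp (rotS_le_rotS.mp hp.1)
    have hub : j ≤ j' + 1 :=
      pind_pow_constraint hj hj' (fun a => r_mem_rotS) (fun a => r_mem_rotS) hp
    rcases (by omega : j = j' ∨ j = j' + 1) with rfl | rfl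
    · exact ⟨Sum.inl ⟨j, by omega⟩, rfl⟩
    · exact ⟨Sum.inr (Sum.inl ⟨j', by omega⟩), rfl⟩
  · -- rot / dih
    have hle : j' ≤ j := (Zs_le_Zs hj hj').mp (rotS_le_dihS.mp hp.1)
    have hub : j ≤ j' := pind_rot_dih_constraint hj hj' _ hp
    obtain rfl : j = j' := le_antisymm hub hle
    exact ⟨Sum.inr (Sum.inr (Sum.inl ⟨⟨j, by omega⟩, ⟨i', hi'⟩⟩)), rfl⟩
  · -- dih / rot : impossible
    exact absurd hp.1 not_dihS_le_rotS
  · -- dih / dih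
    obtain ⟨hZ, hsub⟩ := dihS_le_dihS.mp hp.1
    have hle : j' ≤ j := (Zs_le_Zs hj hj').mp hZ
    have hub : j ≤ j' + 1 :=
      pind_pow_constraint hj hj' (fun a => r_mem_dihS) (fun a => r_mem_dihS) hp
    rcases (by omega : j = j' ∨ j = j' + 1) with rfl | rfl
    · obtain rfl : i = i' := (cast_sub_mem_Zs_iff hj hi hi').mp hsub
      exact ⟨Sum.inr (Sum.inr (Sum.inr (Sum.inl ⟨⟨j, by omega⟩, ⟨i, hi⟩⟩))), rfl⟩
    · obtain rfl : i' = i % 2 ^ j' := canon_mod hj' hi' hsub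
      exact ⟨Sum.inr (Sum.inr (Sum.inr (Sum.inr ⟨⟨j', by omega⟩, ⟨i, hi⟩⟩))), rfl⟩

end EnumBij


/-! ### Counting -/

lemma geom_sum (K : ℕ) : ∑ i ∈ Finset.range K, 2 ^ i = 2 ^ K - 1 := by
  induction K with
  | zero => simp
  | succ n ih =>
    rw [Finset.sum_range_succ, ih]
    have h1 : 1 ≤ (2 : ℕ) ^ n := Nat.one_le_two_pow
    have h2 : (2 : ℕ) ^ (n + 1) = 2 * 2 ^ n := by rw [pow_succ]; ring
    omega

lemma geom_sum' (K : ℕ) : ∑ i ∈ Finset.range K, 2 ^ (i + 1) = 2 ^ (K + 1) - 2 := by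
  induction K with
  | zero => simp
  | succ n ih =>
    rw [Finset.sum_range_succ, ih]
    have h1 : 2 ≤ (2 : ℕ) ^ (n + 1) := Nat.one_lt_two_pow_iff.mpr (by omega)
    have h2 : (2 : ℕ) ^ (n + 2) = 2 * 2 ^ (n + 1) := by rw [pow_succ]; ring
    omega

lemma card_EDty (k : ℕ) : Nat.card (EDty k) = 2 ^ (k + 1) + k := by
  show Nat.card (Fin (k + 1) ⊕ (Σ j : Fin (k + 1), Fin (2 ^ (j : ℕ)))) = _
  rw [Nat.card_eq_fintype_card]
  rw [Fintype.card_sum, Fintype.card_sigma]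
  simp only [Fintype.card_fin]
  rw [Fin.sum_univ_eq_sum_range (fun i => 2 ^ i) (k + 1), geom_sum]
  have h1 : 1 ≤ (2 : ℕ) ^ (k + 1) := Nat.one_le_two_pow
  omega

lemma card_EPty (k : ℕ) : Nat.card (EPty k) = 3 * 2 ^ (k + 1) + 2 * k - 3 := by
  show Nat.card (Fin (k + 1) ⊕ Fin k ⊕ (Σ j : Fin (k + 1), Fin (2 ^ (j : ℕ))) ⊕
    (Σ j : Fin (k + 1), Fin (2 ^ (j : ℕ))) ⊕ (Σ j : Fin k, Fin (2 ^ ((j : ℕ) + 1)))) = _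
  rw [Nat.card_eq_fintype_card]
  simp only [Fintype.card_sum, Fintype.card_sigma, Fintype.card_fin]
  rw [Fin.sum_univ_eq_sum_range (fun i => 2 ^ i) (k + 1),
    Fin.sum_univ_eq_sum_range (fun i => 2 ^ (i + 1)) k, geom_sum, geom_sum']
  have h1 : 2 ≤ (2 : ℕ) ^ (k + 1) := Nat.one_lt_two_pow_iff.mpr (by omega)
  omega

theorem master (k : ℕ) :
    Nat.card (Subgroup (Z2 × DihedralGroup (2 ^ k))) = 2 ^ (k + 3) + 3 * k - 3 := by
  haveI : NeZero (2 ^ k) := ⟨pow_ne_zero _ two_ne_zero⟩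
  rw [card_subgroup_prod_eq]
  have h1 : Nat.card (Subgroup (DihedralGroup (2 ^ k))) = 2 ^ (k + 1) + k := by
    rw [← Nat.card_eq_of_bijective _ (EDmap_bij (k := k)), card_EDty]
  have h2 : Nat.card {p : Subgroup (DihedralGroup (2 ^ k)) ×
      Subgroup (DihedralGroup (2 ^ k)) // Pind p.1 p.2} = 3 * 2 ^ (k + 1) + 2 * k - 3 := by
    show Nat.card (PairSub k) = _
    rw [← Nat.card_eq_of_bijective _
      (⟨EPmap_injective, EPmap_surjective⟩ : Function.Bijective (EPmap (k := k))), card_EPty]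
  rw [h1, h2]
  have e : (2 : ℕ) ^ (k + 3) = 4 * 2 ^ (k + 1) := by ring
  have h3 : 2 ≤ (2 : ℕ) ^ (k + 1) := Nat.one_lt_two_pow_iff.mpr (by omega)
  omega

end CardSub

lemma tau_two_pow (n : ℕ) : tau (2 ^ n) = n + 1 := by
  rw [tau, Nat.divisors_prime_pow Nat.prime_two, Finset.card_map, Finset.card_range]

lemma sigma'_two_pow (n : ℕ) : sigma' (2 ^ n) = 2 ^ (n + 1) - 1 := by
  rw [sigma', Nat.divisors_prime_pow Nat.prime_two, Finset.sum_map]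
  simpa using CardSub.geom_sum (n + 1)

/-- For `m ≥ 2` and `n' = 2^{m−1}`, the number of subgroups of `ℤ₂ × D_{2n'}` equals
`5σ(n') + 3τ(n') − 2n' − 1`, which equals `2^{m+2} + 3m − 6`. -/
theorem card_subgroup_Z2_prod_dihedral (m : ℕ) (hm : 2 ≤ m) (n' : ℕ) (hn' : n' = 2 ^ (m - 1)) :
    Nat.card (Subgroup (Multiplicative (ZMod 2) × DihedralGroup n'))
        = 5 * sigma' n' + 3 * tau n' - 2 * n' - 1 ∧
      5 * sigma' n' + 3 * tau n' - 2 * n' - 1 = 2 ^ (m + 2) + 3 * m - 6 := by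
  subst hn'
  have hmaster := CardSub.master (m - 1)
  have he : (m - 1) + 3 = m + 2 := by omega
  have he2 : (m - 1) + 1 = m := by omega
  rw [he] at hmaster
  have ht : tau (2 ^ (m - 1)) = m := by rw [tau_two_pow, he2]
  have hs : sigma' (2 ^ (m - 1)) = 2 ^ m - 1 := by rw [sigma'_two_pow, he2]
  have hp1 : (2 : ℕ) ^ m = 2 * 2 ^ (m - 1) := by
    rw [← pow_succ']
    congr 1
    omega
  have hp2 : (2 : ℕ) ^ (m + 2) = 8 * 2 ^ (m - 1) := by
    rw [show m + 2 = (m - 1) + 3 by omega, pow_add]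
    ring
  have hge : 2 ≤ (2 : ℕ) ^ (m - 1) := Nat.one_lt_two_pow_iff.mpr (by omega)
  rw [ht, hs, hmaster]
  omega
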